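/- Let a, b ∈ ℕ be odd and let T_{a,b} : ℕ → ℕ be the map T_{a,b}(x) = x/2 if x is even and T_{a,b}(x) = (a·x + b)/2 if x is odd. For all k, m ∈ ℕ and all i ∈ ℕ with i < 2^k, we have T_{a,b}^k(2^k·m + i) = a^{p_k(i)}·m + T_{a,b}^k(i), where p_k(i) is the number of indices r with 0 ≤ r < k such that T_{a,b}^r(i) is odd. -/

import Mathlib

/-- The shortcut map of the `a*n + b` problem:
`Tab a b x = x / 2` if `x` is even, `(a * x + b) / 2` if `x` is odd. -/
def Tab (a b : ℕ) : ℕ → ℕ := fun x => if x % 2 = 0 then x / 2 else (a * x + b) / 2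

/-- `p a b k i` is the number of indices `r < k` such that `(Tab a b)^[r] i` is odd. -/
def p (a b k i : ℕ) : ℕ := ((Finset.range k).filter (fun r => Odd ((Tab a b)^[r] i))).card

lemma Tab_even' (a b x : ℕ) (h : x % 2 = 0) : Tab a b x = x / 2 := by simp [Tab, h]

lemma Tab_odd' (a b x : ℕ) (h : x % 2 = 1) : Tab a b x = (a * x + b) / 2 := by simp [Tab, h]

lemma p_succ (a b k i : ℕ) :
    p a b (k + 1) i = (if Odd i then 1 else 0) + p a b k (Tab a b i) := by
  unfold p
  rw [Finset.card_filter, Finset.card_filter, Finset.sum_range_succ']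
  simp [Function.iterate_succ_apply, add_comm]
  rw [Finset.card_filter]
  congr

lemma aux_formula (a b : ℕ) (ha : Odd a) (hb : Odd b) : ∀ k m i : ℕ, i < 2 ^ k →
    (Tab a b)^[k] (2 ^ k * m + i) = a ^ (p a b k i) * m + (Tab a b)^[k] i := by
  intro k
  induction k using Nat.strong_induction_on with
  | _ k IH =>
  match k with
  | 0 =>
    intro m i hi
    interval_cases i
    simp [p]
  | Nat.succ k =>
    intro m i hi
    have h2k : (0:ℕ) < 2 ^ k := Nat.pow_pos (by norm_num)
    have hks : (2:ℕ) ^ (k + 1) = 2 * 2 ^ k := by ring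
    -- parity invariance helper
    have hpar : ∀ s, s < k → ∀ q r : ℕ, r < 2 ^ k →
        (Odd ((Tab a b)^[s] (2 ^ k * q + r)) ↔ Odd ((Tab a b)^[s] r)) := by
      intro s hs q r hr
      set r' := r % 2 ^ s with hr'
      have hr'lt : r' < 2 ^ s := Nat.mod_lt _ (Nat.pow_pos (by norm_num))
      have hrdecomp : r = 2 ^ s * (r / 2 ^ s) + r' := (Nat.div_add_mod r (2 ^ s)).symm
      have h1 : (2:ℕ) ^ k = 2 ^ s * 2 ^ (k - s) := by
        rw [← pow_add]; congr 1; omega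
      have hbig : 2 ^ k * q + r = 2 ^ s * (2 ^ (k - s) * q + r / 2 ^ s) + r' := by
        conv_lhs => rw [h1, hrdecomp]
        ring
      rw [hbig, IH s (by omega) _ _ hr'lt]
      conv_rhs => rw [hrdecomp, IH s (by omega) _ _ hr'lt]
      obtain ⟨c, hc⟩ : 2 ∣ 2 ^ (k - s) := dvd_pow_self 2 (by omega)
      rw [hc]
      have h2 : a ^ p a b s r' * (2 * c * q + r / 2 ^ s) + (Tab a b)^[s] r' =
          2 * (a ^ p a b s r' * c * q) + (a ^ p a b s r' * (r / 2 ^ s) + (Tab a b)^[s] r') := by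
        ring
      rw [h2]
      generalize a ^ p a b s r' * c * q = z
      generalize a ^ p a b s r' * (r / 2 ^ s) + (Tab a b)^[s] r' = y
      simp only [Nat.odd_iff]
      omega
    rcases Nat.even_or_odd i with hie | hio
    · -- i even
      have hi2 : i % 2 = 0 := Nat.even_iff.mp hie
      have hx2 : (2 ^ (k + 1) * m + i) % 2 = 0 := by
        rw [hks, mul_assoc]
        omega
      rw [Function.iterate_succ_apply, Function.iterate_succ_apply,
        Tab_even' a b _ hx2, Tab_even' a b _ hi2]
      have hdiv : (2 ^ (k + 1) * m + i) / 2 = 2 ^ k * m + i / 2 := by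
        rw [hks, mul_assoc]
        omega
      have hilt : i / 2 < 2 ^ k := by omega
      rw [hdiv, IH k (by omega) m (i / 2) hilt]
      congr 2
      rw [p_succ, Tab_even' a b _ hi2]
      simp [Nat.odd_iff, hi2]
    · -- i odd
      have hi2 : i % 2 = 1 := Nat.odd_iff.mp hio
      have ha2 : a % 2 = 1 := Nat.odd_iff.mp ha
      have hb2 : b % 2 = 1 := Nat.odd_iff.mp hb
      have hx2 : (2 ^ (k + 1) * m + i) % 2 = 1 := by
        rw [hks, mul_assoc]
        omega
      set t := (a * i + b) / 2 with ht
      have hteven : (a * i + b) % 2 = 0 := by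
        rw [Nat.add_mod, Nat.mul_mod, ha2, hi2, hb2]
      set q := t / 2 ^ k with hq
      set r := t % 2 ^ k with hrr
      have hrlt : r < 2 ^ k := Nat.mod_lt _ h2k
      have htdecomp : t = 2 ^ k * q + r := (Nat.div_add_mod t (2 ^ k)).symm
      have hTx : Tab a b (2 ^ (k + 1) * m + i) = 2 ^ k * (a * m + q) + r := by
        rw [Tab_odd' a b _ hx2]
        have h3 : a * (2 ^ (k + 1) * m + i) + b = 2 * (2 ^ k * (a * m)) + (a * i + b) := by
          ring
        have h4 : (2 * (2 ^ k * (a * m)) + (a * i + b)) / 2 = 2 ^ k * (a * m) + t := by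
          rw [ht]; omega
        rw [h3, h4, htdecomp]
        ring
      have hTi : Tab a b i = 2 ^ k * q + r := by
        rw [Tab_odd' a b _ hi2, ← ht, htdecomp]
      rw [Function.iterate_succ_apply, Function.iterate_succ_apply, hTx, hTi,
        IH k (by omega) _ _ hrlt, IH k (by omega) _ _ hrlt]
      have hpeq : p a b k (2 ^ k * q + r) = p a b k r := by
        unfold p
        congr 1
        apply Finset.filter_congr
        intro s hs
        simp only [Finset.mem_range] at hs
        simp [hpar s hs q r hrlt]
      have hpi : p a b (k + 1) i = p a b k r + 1 := by
        rw [p_succ, if_pos hio, hTi, hpeq]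
        omega
      simp only [Nat.succ_eq_add_one]
      rw [hpi, pow_succ]
      ring

theorem general_class_formula (a b : ℕ) (ha : Odd a) (hb : Odd b) (k m i : ℕ)
    (hi : i < 2 ^ k) :
    (Tab a b)^[k] (2 ^ k * m + i) = a ^ (p a b k i) * m + (Tab a b)^[k] i :=
  aux_formula a b ha hb k m i hi
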